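/- Let T_G be the tree associated to a graph G in the n-th Vicsek graph family (vertices of T_G are the sources of G, with edges between sources at distance two in G). If G has at least 2mn edges, then G has at least m collapsible subgraphs. -/

import Mathlib

open scoped Classical

open Finset

/-- In a tree, two distinct vertices cannot share two distinct common neighbours. -/
lemma stmt19_shared {V : Type*} (A : V → V → Prop)
    (hirrefl : ∀ v, ¬ A v v)
    (htree : (SimpleGraph.fromRel A).IsTree) :
    ∀ v w x x', v ≠ w → A v x → A w x → A v x' → A w x' → x = x' := by
  intro v w x x' hvw hvx hwx hvx' hwx'
  set G := SimpleGraph.fromRel A with hG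
  have hadj : ∀ {a b : V}, A a b → G.Adj a b := by
    intro a b h
    exact (SimpleGraph.fromRel_adj A a b).mpr ⟨fun he => hirrefl b (he ▸ h), Or.inl h⟩
  have mk : ∀ y, A v y → A w y → ∃ p : G.Walk v w, p.IsPath ∧ p.support = [v, y, w] := by
    intro y hvy hwy
    refine ⟨SimpleGraph.Walk.cons (hadj hvy) (SimpleGraph.Walk.cons (hadj hwy).symm SimpleGraph.Walk.nil), ?_, ?_⟩
    · rw [SimpleGraph.Walk.isPath_def]
      simp [SimpleGraph.Walk.support]
      refine ⟨⟨fun h => hirrefl y (h ▸ hvy), hvw⟩, fun h => hirrefl y (h ▸ hwy)⟩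
    · simp [SimpleGraph.Walk.support]
  obtain ⟨p1, hp1, hs1⟩ := mk x hvx hwx
  obtain ⟨p2, hp2, hs2⟩ := mk x' hvx' hwx'
  have := (htree.existsUnique_path v w).unique hp1 hp2
  rw [this, hs2] at hs1
  exact ((by simpa using hs1 : x' = x)).symm

/-- The number of directed edges of a tree is the number of vertices minus one. -/
lemma stmt19_edges {V : Type*} [Fintype V] (A : V → V → Prop)
    (hirrefl : ∀ v, ¬ A v v)
    (hasymm : ∀ u v, A u v → ¬ A v u)
    (htree : (SimpleGraph.fromRel A).IsTree) :
    ∑ v : V, (Finset.univ.filter (fun u => A v u)).card = Fintype.card V - 1 := by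
  set G := SimpleGraph.fromRel A with hG
  have hadj : ∀ {a b : V}, A a b → G.Adj a b := by
    intro a b h
    exact (SimpleGraph.fromRel_adj A a b).mpr ⟨fun he => hirrefl b (he ▸ h), Or.inl h⟩
  have h1 : ∑ v : V, (Finset.univ.filter (fun u => A v u)).card
      = ((Finset.univ ×ˢ Finset.univ).filter (fun p : V × V => A p.1 p.2)).card := by
    rw [Finset.card_filter, Finset.sum_product]
    exact Finset.sum_congr rfl fun v _ => (Finset.card_filter _ _)
  rw [h1, ← htree.card_edgeFinset, Nat.add_sub_cancel]
  apply Finset.card_bij (fun p _ => Sym2.mk p.1 p.2)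
  · intro p hp
    simp only [Finset.mem_filter] at hp
    simpa [SimpleGraph.mem_edgeFinset] using hadj hp.2
  · intro p hp q hq hpq
    simp only [Finset.mem_filter] at hp hq
    rcases Sym2.eq_iff.mp hpq with ⟨h1, h2⟩ | ⟨h1, h2⟩
    · exact Prod.ext h1 h2
    · exact absurd hq.2 (by rw [← h1, ← h2]; exact hasymm _ _ hp.2)
  · intro e he
    induction e with
    | _ u v =>
      simp only [SimpleGraph.mem_edgeFinset, SimpleGraph.mem_edgeSet] at he
      rcases he.2 with h | h
      · exact ⟨(u, v), by simp [h], rfl⟩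
      · exact ⟨(v, u), by simp [h], Sym2.eq_swap⟩

/-- Let `G` be a graph in the `n`-th Vicsek graph family (a finite
directed tree in which every vertex is a source or a sink, every source has exactly
`n` outgoing edges, and every sink has one or two incoming edges), and let `T_G` be
the associated tree whose vertices are the sources of `G`, two sources being
adjacent when they are at distance two in `G`.  If `G` has at least `2mn` edges,
then `G` has at least `m` collapsible subgraphs.

Here `A u v` means `G` has a directed edge from `u` to `v`; the underlying
undirected graph is required to be a tree.  Collapsible subgraphs are counted via
the correspondence with the tree `T_G`: each vertex of degree 1 in `T_G`
contributes one collapsible subgraph and each vertex of degree 2 contributes two,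
so that the number of collapsible subgraphs of `G` is at least
`#{degree-1 vertices of T_G} + 2·#{degree-2 vertices of T_G}`. -/
theorem stmt_19 {V : Type*} [Fintype V] (n m : ℕ) (hn : 1 ≤ n)
    (A : V → V → Prop)
    (hirrefl : ∀ v, ¬ A v v)
    (hasymm : ∀ u v, A u v → ¬ A v u)
    (htree : (SimpleGraph.fromRel A).IsTree)
    (hsrcsink : ∀ v : V,
      (Finset.univ.filter (fun u => A u v)).card = 0 ∨
      (Finset.univ.filter (fun u => A v u)).card = 0)
    (hsource : ∀ v : V, (Finset.univ.filter (fun u => A u v)).card = 0 →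
      (Finset.univ.filter (fun u => A v u)).card = n)
    (hsink : ∀ v : V, (Finset.univ.filter (fun u => A v u)).card = 0 →
      (Finset.univ.filter (fun u => A u v)).card = 1 ∨
      (Finset.univ.filter (fun u => A u v)).card = 2)
    (hedges : 2 * m * n ≤ ∑ v : V, (Finset.univ.filter (fun u => A v u)).card) :
    m ≤ (Finset.univ.filter (fun v : V =>
          (Finset.univ.filter (fun u => A u v)).card = 0 ∧
          (Finset.univ.filter (fun w : V => w ≠ v ∧ ∃ x, A v x ∧ A w x)).card = 1)).card
      + 2 * (Finset.univ.filter (fun v : V =>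
          (Finset.univ.filter (fun u => A u v)).card = 0 ∧
          (Finset.univ.filter (fun w : V => w ≠ v ∧ ∃ x, A v x ∧ A w x)).card = 2)).card := by
  classical
  set G := SimpleGraph.fromRel A with hGdef
  -- basic facts
  have hnosrc_in : ∀ v : V, (Finset.univ.filter (fun u => A u v)).card = 0 → ∀ u, ¬ A u v := by
    intro v hv u hu
    have h0 := Finset.card_eq_zero.mp hv
    have : u ∈ Finset.univ.filter (fun u => A u v) := Finset.mem_filter.mpr ⟨Finset.mem_univ u, hu⟩
    rw [h0] at this
    exact absurd this (Finset.notMem_empty u)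
  have hsrc_of_out : ∀ u v : V, A u v → (Finset.univ.filter (fun w => A w u)).card = 0 := by
    intro u v huv
    rcases hsrcsink u with h | h
    · exact h
    · exfalso
      have : v ∈ Finset.univ.filter (fun w => A u w) := Finset.mem_filter.mpr ⟨Finset.mem_univ v, huv⟩
      rw [Finset.card_eq_zero.mp h] at this
      exact Finset.notMem_empty v this
  have hsink_of_in : ∀ v x : V, A v x → (Finset.univ.filter (fun u => A x u)).card = 0 := by
    intro v x hvx
    rcases hsrcsink x with h | h
    · exact absurd hvx (hnosrc_in x h v)
    · exact h
  have hindeg12 : ∀ v x : V, A v x → (Finset.univ.filter (fun u => A u x)).card = 1 ∨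
      (Finset.univ.filter (fun u => A u x)).card = 2 :=
    fun v x h => hsink x (hsink_of_in v x h)
  -- sets
  set Sset : Finset V := Finset.univ.filter (fun v => (Finset.univ.filter (fun u => A u v)).card = 0) with hSsetdef
  set K1set : Finset V := Finset.univ.filter (fun v => (Finset.univ.filter (fun u => A u v)).card = 1) with hK1def
  set K2set : Finset V := Finset.univ.filter (fun v => (Finset.univ.filter (fun u => A u v)).card = 2) with hK2def
  -- partition of the vertices
  have hpartV : Fintype.card V = Sset.card + K1set.card + K2set.card := by
    have hdisj12 : Disjoint K1set K2set := by
      rw [Finset.disjoint_left]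
      intro a h1 h2
      rw [hK1def, Finset.mem_filter] at h1
      rw [hK2def, Finset.mem_filter] at h2
      omega
    have hdisj : Disjoint Sset (K1set ∪ K2set) := by
      rw [Finset.disjoint_left]
      intro a h1 h2
      rw [hSsetdef, Finset.mem_filter] at h1
      rw [Finset.mem_union, hK1def, hK2def, Finset.mem_filter, Finset.mem_filter] at h2
      omega
    have huniv : Sset ∪ (K1set ∪ K2set) = Finset.univ := by
      apply Finset.eq_univ_of_forall
      intro v
      by_cases h0 : (Finset.univ.filter (fun u => A u v)).card = 0
      · exact Finset.mem_union.mpr (Or.inl (Finset.mem_filter.mpr ⟨Finset.mem_univ v, h0⟩))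
      · have hout : (Finset.univ.filter (fun u => A v u)).card = 0 := (hsrcsink v).resolve_left h0
        rcases hsink v hout with h | h
        · exact Finset.mem_union.mpr (Or.inr (Finset.mem_union.mpr (Or.inl (Finset.mem_filter.mpr ⟨Finset.mem_univ v, h⟩))))
        · exact Finset.mem_union.mpr (Or.inr (Finset.mem_union.mpr (Or.inr (Finset.mem_filter.mpr ⟨Finset.mem_univ v, h⟩))))
    rw [← Finset.card_univ, ← huniv, Finset.card_union_of_disjoint hdisj,
      Finset.card_union_of_disjoint hdisj12, Nat.add_assoc]
  -- out-degree sum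
  have hsum_out : ∑ v : V, (Finset.univ.filter (fun u => A v u)).card = n * Sset.card := by
    rw [← Finset.sum_filter_add_sum_filter_not Finset.univ
      (fun v => (Finset.univ.filter (fun u => A u v)).card = 0)]
    have h1 : ∑ v ∈ Finset.univ.filter (fun v => (Finset.univ.filter (fun u => A u v)).card = 0),
        (Finset.univ.filter (fun u => A v u)).card = n * Sset.card := by
      rw [Finset.sum_congr rfl (fun v hv => hsource v (Finset.mem_filter.mp hv).2)]
      rw [Finset.sum_const, smul_eq_mul, mul_comm]
    have h2 : ∑ v ∈ Finset.univ.filter (fun v => ¬(Finset.univ.filter (fun u => A u v)).card = 0),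
        (Finset.univ.filter (fun u => A v u)).card = 0 := by
      apply Finset.sum_eq_zero
      intro v hv
      exact (hsrcsink v).resolve_left (Finset.mem_filter.mp hv).2
    rw [h1, h2, Nat.add_zero]
  -- in-degree sum equals out-degree sum
  have hswap : ∑ v : V, (Finset.univ.filter (fun u => A u v)).card
      = ∑ v : V, (Finset.univ.filter (fun u => A v u)).card := by
    simp only [Finset.card_filter]
    exact Finset.sum_comm
  -- in-degree sum equals K1 + 2 K2
  have hsum_in : ∑ v : V, (Finset.univ.filter (fun u => A u v)).card
      = K1set.card + 2 * K2set.card := by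
    rw [← Finset.sum_filter_add_sum_filter_not Finset.univ
      (fun v => (Finset.univ.filter (fun u => A u v)).card = 0)]
    have h1 : ∑ v ∈ Finset.univ.filter (fun v => (Finset.univ.filter (fun u => A u v)).card = 0),
        (Finset.univ.filter (fun u => A u v)).card = 0 :=
      Finset.sum_eq_zero (fun v hv => (Finset.mem_filter.mp hv).2)
    rw [h1, Nat.zero_add]
    rw [← Finset.sum_filter_add_sum_filter_not _ (fun v => (Finset.univ.filter (fun u => A u v)).card = 1)]
    have hf1 : (Finset.univ.filter (fun v => ¬(Finset.univ.filter (fun u => A u v)).card = 0)).filter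
        (fun v => (Finset.univ.filter (fun u => A u v)).card = 1) = K1set := by
      rw [Finset.filter_filter, hK1def]
      apply Finset.filter_congr
      intro v _
      constructor
      · exact fun h => h.2
      · exact fun h => ⟨by omega, h⟩
    have hf2 : (Finset.univ.filter (fun v => ¬(Finset.univ.filter (fun u => A u v)).card = 0)).filter
        (fun v => ¬(Finset.univ.filter (fun u => A u v)).card = 1) = K2set := by
      rw [Finset.filter_filter, hK2def]
      apply Finset.filter_congr
      intro v _
      constructor
      · intro h
        have hout : (Finset.univ.filter (fun u => A v u)).card = 0 := (hsrcsink v).resolve_left h.1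
        rcases hsink v hout with h' | h'
        · exact absurd h' h.2
        · exact h'
      · exact fun h => ⟨by omega, by omega⟩
    rw [hf1, hf2]
    rw [Finset.sum_congr rfl (fun v hv => (by rw [hK1def, Finset.mem_filter] at hv; exact hv.2 :
      (Finset.univ.filter (fun u => A u v)).card = 1))]
    rw [Finset.sum_congr rfl (fun v hv => (by rw [hK2def, Finset.mem_filter] at hv; exact hv.2 :
      (Finset.univ.filter (fun u => A u v)).card = 2))]
    rw [Finset.sum_const, Finset.sum_const, smul_eq_mul, smul_eq_mul]
    ring
  -- tree edge count
  have hedgecount := stmt19_edges A hirrefl hasymm htree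
  have hVpos : 1 ≤ Fintype.card V := Fintype.card_pos_iff.mpr htree.isConnected.nonempty
  -- S = K2 + 1
  have hSK2 : Sset.card = K2set.card + 1 := by
    have e1 : n * Sset.card = Fintype.card V - 1 := by rw [← hsum_out]; exact hedgecount
    have e2 : n * Sset.card = K1set.card + 2 * K2set.card := by
      rw [← hsum_out, ← hswap]; exact hsum_in
    omega
  -- 2m ≤ S
  have h2m : 2 * m ≤ Sset.card := by
    rw [hsum_out] at hedges
    have : n * (2 * m) ≤ n * Sset.card := by
      calc n * (2 * m) = 2 * m * n := by ring
      _ ≤ n * Sset.card := hedges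
    exact Nat.le_of_mul_le_mul_left this (by omega)
    -- case S ≤ 1
  rcases Nat.lt_or_ge Sset.card 2 with hSlt | hSge
  · have : m = 0 := by omega
    rw [this]
    exact Nat.zero_le _
  -- unique shared sinks
  have hshared := stmt19_shared A hirrefl htree
  -- degree in T_G equals number of out-neighbours of in-degree two
  have hdT : ∀ v : V, (Finset.univ.filter (fun u => A u v)).card = 0 →
      (Finset.univ.filter (fun w : V => w ≠ v ∧ ∃ x, A v x ∧ A w x)).card
        = (Finset.univ.filter (fun x => A v x ∧ (Finset.univ.filter (fun u => A u x)).card = 2)).card := by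
    intro v hv
    have key : ∀ w, w ≠ v → ∀ x, A v x → A w x →
        (Finset.univ.filter (fun u => A u x)).card = 2 := by
      intro w hwv x hvx hwx
      rcases hindeg12 v x hvx with h | h
      · exfalso
        obtain ⟨c, hc⟩ := Finset.card_eq_one.mp h
        have h1 : v ∈ Finset.univ.filter (fun u => A u x) := Finset.mem_filter.mpr ⟨Finset.mem_univ v, hvx⟩
        have h2 : w ∈ Finset.univ.filter (fun u => A u x) := Finset.mem_filter.mpr ⟨Finset.mem_univ w, hwx⟩
        rw [hc, Finset.mem_singleton] at h1 h2
        exact hwv (h2.trans h1.symm)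
      · exact h
    apply Finset.card_bij (fun w hw => Classical.choose (Finset.mem_filter.mp hw).2.2)
    · intro w hw
      obtain ⟨hx1, hx2⟩ := Classical.choose_spec (Finset.mem_filter.mp hw).2.2
      exact Finset.mem_filter.mpr ⟨Finset.mem_univ _, hx1,
        key w (Finset.mem_filter.mp hw).2.1 _ hx1 hx2⟩
    · intro w1 hw1 w2 hw2 heq
      obtain ⟨hs11, hs12⟩ := Classical.choose_spec (Finset.mem_filter.mp hw1).2.2
      obtain ⟨hs21, hs22⟩ := Classical.choose_spec (Finset.mem_filter.mp hw2).2.2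
      have hwv1 := (Finset.mem_filter.mp hw1).2.1
      have hwv2 := (Finset.mem_filter.mp hw2).2.1
      have hw2x : A w2 (Classical.choose (Finset.mem_filter.mp hw1).2.2) := by
        rw [heq]; exact hs22
      by_contra hne
      have hcard2 := key w1 hwv1 _ hs11 hs12
      have hsub : ({v, w1, w2} : Finset V) ⊆
          Finset.univ.filter (fun u => A u (Classical.choose (Finset.mem_filter.mp hw1).2.2)) := by
        intro a ha
        simp only [Finset.mem_insert, Finset.mem_singleton] at ha
        rcases ha with rfl | rfl | rfl
        · exact Finset.mem_filter.mpr ⟨Finset.mem_univ _, hs11⟩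
        · exact Finset.mem_filter.mpr ⟨Finset.mem_univ _, hs12⟩
        · exact Finset.mem_filter.mpr ⟨Finset.mem_univ _, hw2x⟩
      have hc3 : ({v, w1, w2} : Finset V).card = 3 := by
        rw [Finset.card_insert_of_notMem (by simp [Ne.symm hwv1, Ne.symm hwv2]),
          Finset.card_insert_of_notMem (by simpa using hne), Finset.card_singleton]
      have := Finset.card_le_card hsub
      omega
    · intro x hx
      obtain ⟨-, hvx, h2⟩ := Finset.mem_filter.mp hx
      obtain ⟨w, hw, hwv⟩ := Finset.exists_mem_ne
        (show 1 < (Finset.univ.filter (fun u => A u x)).card by omega) v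
      have hwx : A w x := (Finset.mem_filter.mp hw).2
      have hmem : w ∈ Finset.univ.filter (fun w : V => w ≠ v ∧ ∃ x, A v x ∧ A w x) :=
        Finset.mem_filter.mpr ⟨Finset.mem_univ _, hwv, ⟨x, hvx, hwx⟩⟩
      refine ⟨w, hmem, ?_⟩
      obtain ⟨hx1, hx2⟩ := Classical.choose_spec (Finset.mem_filter.mp hmem).2.2
      exact hshared v w _ x (Ne.symm hwv) hx1 hx2 hvx hwx
  -- every source has a T-neighbour (connectivity)
  have hE : ∀ v : V, (Finset.univ.filter (fun u => A u v)).card = 0 →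
      ∃ x, A v x ∧ (Finset.univ.filter (fun u => A u x)).card = 2 := by
    intro v hv
    by_contra hno
    push_neg at hno
    have hall : ∀ x, A v x → (Finset.univ.filter (fun u => A u x)).card = 1 := by
      intro x hvx
      rcases hindeg12 v x hvx with h | h
      · exact h
      · exact absurd h (hno x hvx)
    have hclosed : ∀ a b : V, G.Adj a b → (a = v ∨ A v a) → (b = v ∨ A v b) := by
      intro a b hab ha
      rcases ha with rfl | hva
      · rcases (SimpleGraph.fromRel_adj A a b).mp hab with ⟨hne, h | h⟩
        · exact Or.inr h
        · exact absurd h (hnosrc_in a hv b)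
      · rcases (SimpleGraph.fromRel_adj A a b).mp hab with ⟨hne, h | h⟩
        · exfalso
          have h0 := hsink_of_in v a hva
          have hbm : b ∈ Finset.univ.filter (fun u => A a u) :=
            Finset.mem_filter.mpr ⟨Finset.mem_univ b, h⟩
          rw [Finset.card_eq_zero.mp h0] at hbm
          exact Finset.notMem_empty b hbm
        · have h1 := hall a hva
          obtain ⟨c, hc⟩ := Finset.card_eq_one.mp h1
          have hvm : v ∈ Finset.univ.filter (fun u => A u a) := Finset.mem_filter.mpr ⟨Finset.mem_univ v, hva⟩
          have hbm : b ∈ Finset.univ.filter (fun u => A u a) := Finset.mem_filter.mpr ⟨Finset.mem_univ b, h⟩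
          rw [hc, Finset.mem_singleton] at hvm hbm
          exact Or.inl (hbm.trans hvm.symm)
    have hreach : ∀ a b : V, G.Reachable a b → (a = v ∨ A v a) → (b = v ∨ A v b) := by
      intro a b hr
      obtain ⟨p⟩ := hr
      induction p with
      | nil => exact id
      | cons h q ih => exact fun ha => ih (hclosed _ _ h ha)
    obtain ⟨u, huS, huv⟩ := Finset.exists_mem_ne (show 1 < Sset.card by omega) v
    have hu0 : (Finset.univ.filter (fun w => A w u)).card = 0 := (Finset.mem_filter.mp huS).2
    have := hreach v u (htree.isConnected.preconnected v u) (Or.inl rfl)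
    rcases this with h | h
    · exact huv h
    · exact hnosrc_in u hu0 v h
    -- sum over sources of number of in-degree-2 out-neighbours = 2 * K2
  have hsum2 : ∑ v ∈ Sset, (Finset.univ.filter
        (fun x => A v x ∧ (Finset.univ.filter (fun u => A u x)).card = 2)).card
      = 2 * K2set.card := by
    have step1 : ∑ v ∈ Sset, (Finset.univ.filter
          (fun x => A v x ∧ (Finset.univ.filter (fun u => A u x)).card = 2)).card
        = ∑ v ∈ Sset, ∑ x : V,
            if A v x ∧ (Finset.univ.filter (fun u => A u x)).card = 2 then 1 else 0 :=
      Finset.sum_congr rfl (fun v _ => Finset.card_filter _ _)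
    rw [step1, Finset.sum_comm]
    have hx : ∀ x : V, (∑ v ∈ Sset,
        if A v x ∧ (Finset.univ.filter (fun u => A u x)).card = 2 then 1 else 0)
        = if (Finset.univ.filter (fun u => A u x)).card = 2 then 2 else 0 := by
      intro x
      by_cases h2 : (Finset.univ.filter (fun u => A u x)).card = 2
      · rw [if_pos h2]
        have hiff : ∀ v : V, (A v x ∧ (Finset.univ.filter (fun u => A u x)).card = 2) ↔ A v x :=
          fun v => ⟨fun h => h.1, fun h => ⟨h, h2⟩⟩
        calc (∑ v ∈ Sset, if A v x ∧ (Finset.univ.filter (fun u => A u x)).card = 2 then 1 else 0)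
            = ∑ v ∈ Sset, if A v x then 1 else 0 :=
              Finset.sum_congr rfl (fun v _ => by rw [if_congr (hiff v) rfl rfl])
          _ = (Sset.filter (fun v => A v x)).card := (Finset.card_filter _ _).symm
          _ = 2 := by
              have heq : Sset.filter (fun v => A v x) = Finset.univ.filter (fun v => A v x) := by
                ext a
                constructor
                · intro ha
                  exact Finset.mem_filter.mpr ⟨Finset.mem_univ a, (Finset.mem_filter.mp ha).2⟩
                · intro ha
                  have haA := (Finset.mem_filter.mp ha).2
                  exact Finset.mem_filter.mpr
                    ⟨Finset.mem_filter.mpr ⟨Finset.mem_univ a, hsrc_of_out a x haA⟩, haA⟩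
              rw [heq]
              exact h2
      · rw [if_neg h2]
        apply Finset.sum_eq_zero
        intro v _
        rw [if_neg (fun hc => h2 hc.2)]
    rw [Finset.sum_congr rfl (fun x _ => hx x), ← Finset.sum_filter, Finset.sum_const, smul_eq_mul]
    rw [mul_comm]
  have hsumdT : ∑ v ∈ Sset, (Finset.univ.filter
        (fun w : V => w ≠ v ∧ ∃ x, A v x ∧ A w x)).card = 2 * K2set.card := by
    rw [Finset.sum_congr rfl (fun v hv => hdT v (Finset.mem_filter.mp hv).2)]
    exact hsum2
  -- every source has T-degree at least 1
  have hge1 : ∀ v ∈ Sset,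
      1 ≤ (Finset.univ.filter (fun w : V => w ≠ v ∧ ∃ x, A v x ∧ A w x)).card := by
    intro v hv
    have h0 := (Finset.mem_filter.mp hv).2
    obtain ⟨x, hx1, hx2⟩ := hE v h0
    rw [hdT v h0]
    exact Finset.card_pos.mpr ⟨x, Finset.mem_filter.mpr ⟨Finset.mem_univ x, hx1, hx2⟩⟩
  -- partition of sources by T-degree
  have hpartS : Sset.card
      = (Sset.filter (fun v => (Finset.univ.filter (fun w : V => w ≠ v ∧ ∃ x, A v x ∧ A w x)).card = 1)).card
      + (Sset.filter (fun v => (Finset.univ.filter (fun w : V => w ≠ v ∧ ∃ x, A v x ∧ A w x)).card = 2)).card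
      + (Sset.filter (fun v => ¬(Finset.univ.filter (fun w : V => w ≠ v ∧ ∃ x, A v x ∧ A w x)).card = 1
          ∧ ¬(Finset.univ.filter (fun w : V => w ≠ v ∧ ∃ x, A v x ∧ A w x)).card = 2)).card := by
    have t1 := Finset.card_filter_add_card_filter_not (s := Sset)
      (p := fun v => (Finset.univ.filter (fun w : V => w ≠ v ∧ ∃ x, A v x ∧ A w x)).card = 1)
    have t2 := Finset.card_filter_add_card_filter_not
      (s := Sset.filter (fun v => ¬(Finset.univ.filter (fun w : V => w ≠ v ∧ ∃ x, A v x ∧ A w x)).card = 1))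
      (p := fun v => (Finset.univ.filter (fun w : V => w ≠ v ∧ ∃ x, A v x ∧ A w x)).card = 2)
    have e1 : (Sset.filter (fun v => ¬(Finset.univ.filter (fun w : V => w ≠ v ∧ ∃ x, A v x ∧ A w x)).card = 1)).filter
          (fun v => (Finset.univ.filter (fun w : V => w ≠ v ∧ ∃ x, A v x ∧ A w x)).card = 2)
        = Sset.filter (fun v => (Finset.univ.filter (fun w : V => w ≠ v ∧ ∃ x, A v x ∧ A w x)).card = 2) := by
      ext a
      simp only [Finset.mem_filter]
      constructor
      · rintro ⟨⟨h1, -⟩, h2⟩; exact ⟨h1, h2⟩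
      · rintro ⟨h1, h2⟩; exact ⟨⟨h1, by omega⟩, h2⟩
    have e2 : (Sset.filter (fun v => ¬(Finset.univ.filter (fun w : V => w ≠ v ∧ ∃ x, A v x ∧ A w x)).card = 1)).filter
          (fun v => ¬(Finset.univ.filter (fun w : V => w ≠ v ∧ ∃ x, A v x ∧ A w x)).card = 2)
        = Sset.filter (fun v => ¬(Finset.univ.filter (fun w : V => w ≠ v ∧ ∃ x, A v x ∧ A w x)).card = 1
            ∧ ¬(Finset.univ.filter (fun w : V => w ≠ v ∧ ∃ x, A v x ∧ A w x)).card = 2) := by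
      ext a
      simp only [Finset.mem_filter]
      tauto
    rw [e1, e2] at t2
    omega
  -- lower bound on the degree sum
  have hlow : (Sset.filter (fun v => (Finset.univ.filter (fun w : V => w ≠ v ∧ ∃ x, A v x ∧ A w x)).card = 1)).card * 1
      + (Sset.filter (fun v => (Finset.univ.filter (fun w : V => w ≠ v ∧ ∃ x, A v x ∧ A w x)).card = 2)).card * 2
      + (Sset.filter (fun v => ¬(Finset.univ.filter (fun w : V => w ≠ v ∧ ∃ x, A v x ∧ A w x)).card = 1
          ∧ ¬(Finset.univ.filter (fun w : V => w ≠ v ∧ ∃ x, A v x ∧ A w x)).card = 2)).card * 3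
      ≤ ∑ v ∈ Sset, (Finset.univ.filter (fun w : V => w ≠ v ∧ ∃ x, A v x ∧ A w x)).card := by
    have hpt : ∀ v ∈ Sset,
        ((if (Finset.univ.filter (fun w : V => w ≠ v ∧ ∃ x, A v x ∧ A w x)).card = 1 then 1 else 0)
        + (if (Finset.univ.filter (fun w : V => w ≠ v ∧ ∃ x, A v x ∧ A w x)).card = 2 then 2 else 0)
        + (if ¬(Finset.univ.filter (fun w : V => w ≠ v ∧ ∃ x, A v x ∧ A w x)).card = 1
            ∧ ¬(Finset.univ.filter (fun w : V => w ≠ v ∧ ∃ x, A v x ∧ A w x)).card = 2 then 3 else 0))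
        ≤ (Finset.univ.filter (fun w : V => w ≠ v ∧ ∃ x, A v x ∧ A w x)).card := by
      intro v hv
      have h1 := hge1 v hv
      split_ifs <;> omega
    have hle := Finset.sum_le_sum hpt
    rw [Finset.sum_add_distrib, Finset.sum_add_distrib,
      ← Finset.sum_filter, ← Finset.sum_filter, ← Finset.sum_filter,
      Finset.sum_const, Finset.sum_const, Finset.sum_const,
      smul_eq_mul, smul_eq_mul, smul_eq_mul] at hle
    exact hle
  -- rewrite the goal sets
  have hg1 := Finset.filter_filter
    (fun v : V => (Finset.univ.filter (fun u => A u v)).card = 0)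
    (fun v : V => (Finset.univ.filter (fun w : V => w ≠ v ∧ ∃ x, A v x ∧ A w x)).card = 1)
    Finset.univ
  have hg2 := Finset.filter_filter
    (fun v : V => (Finset.univ.filter (fun u => A u v)).card = 0)
    (fun v : V => (Finset.univ.filter (fun w : V => w ≠ v ∧ ∃ x, A v x ∧ A w x)).card = 2)
    Finset.univ
  rw [← hg1, ← hg2, ← hSsetdef]
  omega
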